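/- One-shot classical capacity upper bound (specialized form): let 𝒩, Λ be channels and λ = 2^{D}, where D ≥ 0 satisfies that λΛ − 𝒩 is a positive map. Let Γ = log₂ sup_{Θ_M} Σ_{m} tr[E_m Λ(ρ_m)] (sup over all M and M-codes). Then for every 0 ≤ ε < 1, the one-shot classical capacity C^ε_{(1)}(𝒩) = max{log₂ M : ∃ Θ_M with p_s(Θ_M,𝒩) ≥ 1−ε} satisfies C^ε_{(1)}(𝒩) ≤ D + Γ + log₂(1/(1−ε)). -/

import Mathlib

open scoped BigOperators Kronecker ENNReal NNReal ComplexOrder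
open Matrix

noncomputable section

/-- A density matrix: positive semidefinite with unit trace. -/
def IsDensity {ι : Type*} [Fintype ι] (ρ : Matrix ι ι ℂ) : Prop :=
  ρ.PosSemidef ∧ ρ.trace = 1

/-- A completely positive trace-preserving map, presented by a Kraus decomposition. -/
def IsCPTP {ι κ : Type*} [Fintype ι] [DecidableEq ι] [Fintype κ] [DecidableEq κ]
    (Φ : Matrix ι ι ℂ → Matrix κ κ ℂ) : Prop :=
  ∃ (r : ℕ) (K : Fin r → Matrix κ ι ℂ),
    (∀ M, Φ M = ∑ i, K i * M * (K i)ᴴ) ∧ (∑ i, (K i)ᴴ * K i = 1)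

/-- Ampliation `Φ ⊗ id` of a superoperator, acting on the first tensor factor. -/
def ampL {ι κ α : Type*} (Φ : Matrix ι ι ℂ → Matrix κ κ ℂ) :
    Matrix (ι × α) (ι × α) ℂ → Matrix (κ × α) (κ × α) ℂ :=
  fun M => Matrix.of fun p q =>
    Φ (Matrix.of fun i j => M (i, p.2) (j, q.2)) p.1 q.1

/-- Ampliation `id ⊗ Λ` of a superoperator, acting on the second tensor factor. -/
def ampR {ι κ α : Type*} (Λ : Matrix ι ι ℂ → Matrix κ κ ℂ) :
    Matrix (α × ι) (α × ι) ℂ → Matrix (α × κ) (α × κ) ℂ :=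
  fun M => Matrix.of fun p q =>
    Λ (Matrix.of fun i j => M (p.1, i) (q.1, j)) p.2 q.2

/-- Tensor product `Φ ⊗ Λ` of superoperators. -/
def tensorMap {ι κ ι' κ' : Type*} (Φ : Matrix ι ι ℂ → Matrix κ κ ℂ)
    (Λ : Matrix ι' ι' ℂ → Matrix κ' κ' ℂ) :
    Matrix (ι × ι') (ι × ι') ℂ → Matrix (κ × κ') (κ × κ') ℂ :=
  fun M => ampL Φ (ampR Λ M)

/-- The positive semidefinite square root of a positive semidefinite matrix
(the former Mathlib `Matrix.PosSemidef.sqrt`, spelled out). -/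
def posSemidefSqrt {n : Type*} [Fintype n] [DecidableEq n] {A : Matrix n n ℂ}
    (hA : A.PosSemidef) : Matrix n n ℂ :=
  hA.1.eigenvectorUnitary.1 * diagonal ((↑) ∘ (√·) ∘ hA.1.eigenvalues) *
  (star hA.1.eigenvectorUnitary : Matrix n n ℂ)

/-- Trace norm `‖M‖₁ = tr √(MᴴM)`. -/
def traceNorm {ι : Type*} [Fintype ι] [DecidableEq ι] (M : Matrix ι ι ℂ) : ℝ :=
  ((posSemidefSqrt (Matrix.posSemidef_conjTranspose_mul_self M)).trace).re

/-- Diamond norm: supremum over finite-dimensional ancillas and joint states of the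
trace norm of the ampliated output. -/
def diamondNorm {ι κ : Type*} [Fintype ι] [DecidableEq ι] [Fintype κ] [DecidableEq κ]
    (Φ : Matrix ι ι ℂ → Matrix κ κ ℂ) : ℝ :=
  ⨆ a : ℕ, ⨆ ρ : {ρ : Matrix (ι × Fin a) (ι × Fin a) ℂ // IsDensity ρ},
    traceNorm (ampL Φ (α := Fin a) ρ.1)

/-- An `M`-code: `M` input states together with a decoding POVM. -/
structure MCode (ι κ : Type*) [Fintype ι] [Fintype κ] [DecidableEq κ] (M : ℕ) where
  ρ : Fin M → Matrix ι ι ℂ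
  E : Fin M → Matrix κ κ ℂ
  hρ : ∀ m, IsDensity (ρ m)
  hE : ∀ m, (E m).PosSemidef
  hsum : ∑ m, E m = 1

/-- Average success probability `p_s(Θ_M, 𝒩) = (1/M) Σ_m tr[E_m 𝒩(ρ_m)]`. -/
def ps {ι κ : Type*} [Fintype ι] [Fintype κ] [DecidableEq κ] {M : ℕ}
    (Θ : MCode ι κ M) (𝒩 : Matrix ι ι ℂ → Matrix κ κ ℂ) : ℝ :=
  (M : ℝ)⁻¹ * ∑ m, ((Θ.E m * 𝒩 (Θ.ρ m)).trace).re


/-- Diagonal entries of a PSD matrix are nonneg. -/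
lemma psd_trace_re_nonneg' {n : Type*} [Fintype n] [DecidableEq n] {A : Matrix n n ℂ}
    (hA : A.PosSemidef) : 0 ≤ A.trace.re := by
  have h : ∀ i, (0:ℂ) ≤ A i i := by
    intro i
    exact hA.diag_nonneg
  have : (0:ℂ) ≤ A.trace := Finset.sum_nonneg fun i _ => h i
  exact (Complex.nonneg_iff.mp this).1

open scoped MatrixOrder in
lemma trace_mul_re_nonneg' {n : Type*} [Fintype n] [DecidableEq n] {A B : Matrix n n ℂ}
    (hA : A.PosSemidef) (hB : B.PosSemidef) : 0 ≤ ((A * B).trace).re := by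
  have h2 : (A * B).trace = (CFC.sqrt A * B * CFC.sqrt A).trace := by
    conv_lhs => rw [← CFC.sqrt_mul_sqrt_self A hA.nonneg]
    rw [mul_assoc, Matrix.trace_mul_comm]
  have h3 : (CFC.sqrt A * B * CFC.sqrt A).PosSemidef := by
    have := hB.mul_mul_conjTranspose_same (CFC.sqrt A)
    rwa [(CFC.sqrt_nonneg A).posSemidef.1.eq] at this
  rw [h2]
  exact psd_trace_re_nonneg' h3

lemma one_sub_posSemidef' {n : Type*} [Fintype n] [DecidableEq n] {A : Matrix n n ℂ}
    (hA : A.PosSemidef) (ht : A.trace = 1) : (1 - A).PosSemidef := by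
  have hH := hA.1
  have hUU : (hH.eigenvectorUnitary : Matrix n n ℂ) * star (hH.eigenvectorUnitary : Matrix n n ℂ)
      = 1 := Unitary.coe_mul_star_self _
  have hUU' : star (hH.eigenvectorUnitary : Matrix n n ℂ) * (hH.eigenvectorUnitary : Matrix n n ℂ)
      = 1 := Unitary.coe_star_mul_self _
  have htr : A.trace = ∑ i, (hH.eigenvalues i : ℂ) := by
    conv_lhs => rw [hH.spectral_theorem, Unitary.conjStarAlgAut_apply]
    rw [Matrix.trace_mul_cycle, hUU', one_mul, Matrix.trace_diagonal]
    rfl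
  have hsum : ∑ i, hH.eigenvalues i = 1 := by
    have : ((∑ i, hH.eigenvalues i : ℝ) : ℂ) = 1 := by push_cast; rw [← htr, ht]
    exact_mod_cast this
  have hle : ∀ i, hH.eigenvalues i ≤ 1 := by
    intro i
    rw [← hsum]
    exact Finset.single_le_sum (fun j _ => hA.eigenvalues_nonneg j) (Finset.mem_univ i)
  have hdiag : (Matrix.diagonal (fun i => ((1 - hH.eigenvalues i : ℝ) : ℂ))).PosSemidef := by
    refine Matrix.posSemidef_diagonal_iff.mpr fun i => ?_
    rw [Complex.nonneg_iff]
    constructor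
    · simpa using sub_nonneg.mpr (hle i)
    · simp
  have := hdiag.mul_mul_conjTranspose_same (hH.eigenvectorUnitary : Matrix n n ℂ)
  have heq : (hH.eigenvectorUnitary : Matrix n n ℂ) *
      Matrix.diagonal (fun i => ((1 - hH.eigenvalues i : ℝ) : ℂ)) *
      (hH.eigenvectorUnitary : Matrix n n ℂ)ᴴ = 1 - A := by
    have hdd : Matrix.diagonal (fun i => ((1 - hH.eigenvalues i : ℝ) : ℂ))
        = 1 - Matrix.diagonal (RCLike.ofReal ∘ hH.eigenvalues) := by
      rw [← Matrix.diagonal_one, Matrix.diagonal_sub]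
      congr 1
      funext i
      push_cast
      rfl
    rw [hdd, Matrix.mul_sub, mul_one, Matrix.sub_mul, ← Matrix.star_eq_conjTranspose, hUU]
    congr 1
    conv_rhs => rw [hH.spectral_theorem, Unitary.conjStarAlgAut_apply]
  rwa [heq] at this

lemma cptp_posSemidef' {ι κ : Type*} [Fintype ι] [DecidableEq ι] [Fintype κ] [DecidableEq κ]
    {Φ : Matrix ι ι ℂ → Matrix κ κ ℂ} (h : IsCPTP Φ) {ρ : Matrix ι ι ℂ}
    (hρ : ρ.PosSemidef) : (Φ ρ).PosSemidef := by
  obtain ⟨r, K, hK, -⟩ := h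
  rw [hK]
  exact Finset.sum_induction _ Matrix.PosSemidef
    (fun A B hA hB => hA.add hB) Matrix.PosSemidef.zero
    (fun i _ => hρ.mul_mul_conjTranspose_same (K i))

lemma cptp_trace' {ι κ : Type*} [Fintype ι] [DecidableEq ι] [Fintype κ] [DecidableEq κ]
    {Φ : Matrix ι ι ℂ → Matrix κ κ ℂ} (h : IsCPTP Φ) (ρ : Matrix ι ι ℂ) :
    (Φ ρ).trace = ρ.trace := by
  obtain ⟨r, K, hK, hsum⟩ := h
  rw [hK, Matrix.trace_sum]
  calc ∑ i, (K i * ρ * (K i)ᴴ).trace = ∑ i, ((K i)ᴴ * K i * ρ).trace := by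
        refine Finset.sum_congr rfl fun i _ => ?_
        rw [Matrix.trace_mul_cycle]
    _ = ((∑ i, (K i)ᴴ * K i) * ρ).trace := by
        rw [Finset.sum_mul, Matrix.trace_sum]
    _ = ρ.trace := by rw [hsum, one_mul]

/-- One-shot classical capacity upper bound, δ = κ = 0 version of
Theorem 1: if `2^D Λ − 𝒩` is a positive map (`D ≥ 0`), and
`Γ = log₂ sup_{codes} Σ_m tr[E_m Λ(ρ_m)]`, then every `M`-code with success probability
at least `1 − ε` satisfies `log₂ M ≤ D + Γ + log₂(1/(1−ε))`; i.e.
`C^ε_{(1)}(𝒩) ≤ D + Γ + log₂(1/(1−ε))`. -/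
theorem one_shot_capacity_upper_bound {dIn dOut : ℕ}
    (𝒩 Λ : Matrix (Fin dIn) (Fin dIn) ℂ → Matrix (Fin dOut) (Fin dOut) ℂ)
    (h𝒩 : IsCPTP 𝒩) (hΛ : IsCPTP Λ) (D : ℝ) (hD : 0 ≤ D)
    (hpos : ∀ ρ : Matrix (Fin dIn) (Fin dIn) ℂ, ρ.PosSemidef →
      (((2 : ℝ) ^ D) • Λ ρ - 𝒩 ρ).PosSemidef)
    (Γ : ℝ)
    (hΓ : Γ = Real.logb 2 (⨆ c : Σ M : ℕ, MCode (Fin dIn) (Fin dOut) M,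
      ∑ m, ((c.2.E m * Λ (c.2.ρ m)).trace).re))
    (ε : ℝ) (hε0 : 0 ≤ ε) (hε1 : ε < 1) :
    ∀ (M : ℕ), 0 < M → ∀ Θ : MCode (Fin dIn) (Fin dOut) M,
      1 - ε ≤ ps Θ 𝒩 →
      Real.logb 2 M ≤ D + Γ + Real.logb 2 (1 / (1 - ε)) := by
  intro M hM Θ hps
  set S : ℝ := ⨆ c : Σ M : ℕ, MCode (Fin dIn) (Fin dOut) M,
      ∑ m, ((c.2.E m * Λ (c.2.ρ m)).trace).re with hSdef
  -- every code's value is at most dOut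
  have bdd : ∀ c : Σ M : ℕ, MCode (Fin dIn) (Fin dOut) M,
      ∑ m, ((c.2.E m * Λ (c.2.ρ m)).trace).re ≤ (dOut : ℝ) := by
    intro c
    have hub : ∀ m, ((c.2.E m * Λ (c.2.ρ m)).trace).re ≤ ((c.2.E m).trace).re := by
      intro m
      have hL : (Λ (c.2.ρ m)).PosSemidef := cptp_posSemidef' hΛ (c.2.hρ m).1
      have hLt : (Λ (c.2.ρ m)).trace = 1 := by rw [cptp_trace' hΛ, (c.2.hρ m).2]
      have h0 := trace_mul_re_nonneg' (c.2.hE m) (one_sub_posSemidef' hL hLt)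
      have hexp : (c.2.E m * (1 - Λ (c.2.ρ m))).trace
          = (c.2.E m).trace - (c.2.E m * Λ (c.2.ρ m)).trace := by
        rw [Matrix.mul_sub, mul_one, Matrix.trace_sub]
      rw [hexp, Complex.sub_re] at h0
      linarith
    calc ∑ m, ((c.2.E m * Λ (c.2.ρ m)).trace).re
        ≤ ∑ m, ((c.2.E m).trace).re := Finset.sum_le_sum fun m _ => hub m
      _ = ((∑ m, (c.2.E m).trace)).re := by rw [Complex.re_sum]
      _ = (((∑ m, c.2.E m).trace)).re := by rw [Matrix.trace_sum]
      _ = (dOut : ℝ) := by rw [c.2.hsum, Matrix.trace_one]; simp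
  have hbdd : BddAbove (Set.range fun c : Σ M : ℕ, MCode (Fin dIn) (Fin dOut) M =>
      ∑ m, ((c.2.E m * Λ (c.2.ρ m)).trace).re) := by
    refine ⟨(dOut : ℝ), ?_⟩
    rintro x ⟨c, rfl⟩
    exact bdd c
  have hle_S : ∑ m, ((Θ.E m * Λ (Θ.ρ m)).trace).re ≤ S :=
    le_ciSup hbdd (⟨M, Θ⟩ : Σ M : ℕ, MCode (Fin dIn) (Fin dOut) M)
  -- pointwise comparison between 𝒩 and 2^D Λ
  have key1 : ∀ m, ((Θ.E m * 𝒩 (Θ.ρ m)).trace).re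
      ≤ (2:ℝ)^D * ((Θ.E m * Λ (Θ.ρ m)).trace).re := by
    intro m
    have h0 := trace_mul_re_nonneg' (Θ.hE m) (hpos _ (Θ.hρ m).1)
    have hexp : (Θ.E m * (((2:ℝ)^D) • Λ (Θ.ρ m) - 𝒩 (Θ.ρ m))).trace
        = ((2:ℝ)^D) • (Θ.E m * Λ (Θ.ρ m)).trace - (Θ.E m * 𝒩 (Θ.ρ m)).trace := by
      rw [Matrix.mul_sub, Matrix.mul_smul, Matrix.trace_sub, Matrix.trace_smul]
    rw [hexp, Complex.sub_re, Complex.smul_re] at h0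
    simp only [smul_eq_mul] at h0
    linarith
  have hM' : (0:ℝ) < M := by exact_mod_cast hM
  have h1ε : (0:ℝ) < 1 - ε := by linarith
  have h2D : (0:ℝ) < (2:ℝ)^D := Real.rpow_pos_of_pos two_pos D
  have hchain : (M:ℝ) * (1 - ε) ≤ (2:ℝ)^D * S := by
    have h1 : (M:ℝ) * (1 - ε) ≤ ∑ m, ((Θ.E m * 𝒩 (Θ.ρ m)).trace).re := by
      rw [ps] at hps
      have := mul_le_mul_of_nonneg_left hps hM'.le
      rw [← mul_assoc, mul_inv_cancel₀ (ne_of_gt hM'), one_mul] at this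
      linarith
    have h2 : ∑ m, ((Θ.E m * 𝒩 (Θ.ρ m)).trace).re
        ≤ (2:ℝ)^D * ∑ m, ((Θ.E m * Λ (Θ.ρ m)).trace).re := by
      rw [Finset.mul_sum]
      exact Finset.sum_le_sum fun m _ => key1 m
    nlinarith [mul_le_mul_of_nonneg_left hle_S h2D.le]
  have hS : 0 < S := by nlinarith [mul_pos hM' h1ε]
  have hMle : (M:ℝ) ≤ (2:ℝ)^D * S * (1 / (1 - ε)) := by
    rw [mul_one_div, le_div_iff₀ h1ε]
    exact hchain
  calc Real.logb 2 M ≤ Real.logb 2 ((2:ℝ)^D * S * (1 / (1 - ε))) :=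
        Real.logb_le_logb_of_le one_lt_two hM' hMle
    _ = D + Γ + Real.logb 2 (1 / (1 - ε)) := by
        rw [Real.logb_mul (by positivity) (by positivity),
          Real.logb_mul (ne_of_gt h2D) (ne_of_gt hS),
          Real.logb_rpow (by norm_num) (by norm_num), hΓ]

end
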